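/- Let D ⊂ ℂⁿ be a domain, Φ₂ a plurisubharmonic function on D with Φ₂ ≢ -∞, and let D'' ⊂⊂ D' ⊂⊂ D be relatively compact open subsets such that there exists s₀ > 0 with ∫_{D'} e^{-sΦ₂} < +∞ for all s ∈ [0, s₀). Then there exists a constant C₃ > 0, independent of the function, such that for every holomorphic function G on D and every z ∈ D'', |G(z)|² ≤ C₃ ∫_{D'} |G|² e^{Φ₂}. -/

import Mathlib

open MeasureTheory Complex Set Filter

noncomputable section

/-- The "positive part" of an extended real, as an extended nonnegative real. -/
def erealPosPart (x : EReal) : ENNReal :=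
  if x = ⊤ then ⊤ else ENNReal.ofReal x.toReal

/-- The (upper-part minus lower-part) integral of an `EReal`-valued function. -/
def erealIntegral {α : Type*} [MeasurableSpace α] (μ : Measure α) (f : α → EReal) : EReal :=
  ((∫⁻ x, erealPosPart (f x) ∂μ : ENNReal) : EReal) -
    ((∫⁻ x, erealPosPart (-(f x)) ∂μ : ENNReal) : EReal)

/-- `u : D → [-∞,∞)` is plurisubharmonic on `D ⊆ ℂⁿ`: it is upper semicontinuous on `D`,
not identically `-∞` near any point of `D`, and satisfies the sub-mean value inequality on
every closed complex disc contained in `D`. -/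
def PlurisubharmonicOn {n : ℕ} (u : (Fin n → ℂ) → EReal) (D : Set (Fin n → ℂ)) : Prop :=
  UpperSemicontinuousOn u D ∧
  (∀ z ∈ D, ∀ V ∈ nhds z, ∃ w ∈ V ∩ D, u w ≠ ⊥) ∧
  ∀ z ∈ D, ∀ w : Fin n → ℂ, ∀ r : ℝ, 0 < r →
    (∀ l : ℂ, ‖l‖ ≤ r → z + l • w ∈ D) →
    u z ≤ (((2 * Real.pi)⁻¹ : ℝ) : EReal) *
      erealIntegral (volume.restrict (Set.Ioc (0:ℝ) (2 * Real.pi)))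
        (fun θ : ℝ => u (z + ((r : ℂ) * Complex.exp (θ * Complex.I)) • w))

/-- A pseudoconvex domain in `ℂⁿ`: a nonempty connected open set admitting a continuous
plurisubharmonic exhaustion function. -/
def IsPseudoconvexDomain {n : ℕ} (D : Set (Fin n → ℂ)) : Prop :=
  IsOpen D ∧ IsConnected D ∧
  ∃ u : (Fin n → ℂ) → ℝ, ContinuousOn u D ∧
    PlurisubharmonicOn (fun z => ((u z : ℝ) : EReal)) D ∧
    ∀ c : ℝ, IsCompact {z | z ∈ D ∧ u z ≤ c}

/-- `∫_A |F|² e^{-w}`, valued in `[0,∞]`. -/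
def wtInt {n : ℕ} (A : Set (Fin n → ℂ)) (F : (Fin n → ℂ) → ℂ) (w : (Fin n → ℂ) → EReal) :
    ENNReal :=
  ∫⁻ z in A, (‖F z‖₊ : ENNReal) ^ 2 * EReal.exp (-(w z))

/-- `∫_A |F|^p e^{-w}`, valued in `[0,∞]`. -/
def wtIntP {n : ℕ} (A : Set (Fin n → ℂ)) (F : (Fin n → ℂ) → ℂ) (p : ℝ)
    (w : (Fin n → ℂ) → EReal) : ENNReal :=
  ∫⁻ z in A, (‖F z‖₊ : ENNReal) ^ p * EReal.exp (-(w z))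

/-- The germ `(f,o)` belongs to the multiplier ideal `I(w)_o`: `f` is holomorphic and
`|f|² e^{-w}` is integrable on some neighborhood of `o` contained in `D`. -/
def MemMultIdeal {n : ℕ} (D : Set (Fin n → ℂ)) (w : (Fin n → ℂ) → EReal) (o : Fin n → ℂ)
    (f : (Fin n → ℂ) → ℂ) : Prop :=
  ∃ U, IsOpen U ∧ o ∈ U ∧ U ⊆ D ∧ DifferentiableOn ℂ f U ∧ wtInt U f w < ⊤

/-- The germ `(f,o)` belongs to `I₊(w)_o := ⋃_{q>1} I(q·w)_o`. -/
def MemMultIdealPlus {n : ℕ} (D : Set (Fin n → ℂ)) (w : (Fin n → ℂ) → EReal) (o : Fin n → ℂ)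
    (f : (Fin n → ℂ) → ℂ) : Prop :=
  ∃ q : ℝ, 1 < q ∧ MemMultIdeal D (fun z => (q : EReal) * w z) o f

/-- The jumping number `c_o^F(φ) = sup{c ≥ 0 : |F|² e^{-2cφ} is L¹ near o}`, in `[0,∞]`. -/
def jumpNum {n : ℕ} (D : Set (Fin n → ℂ)) (F : (Fin n → ℂ) → ℂ) (φ : (Fin n → ℂ) → EReal)
    (o : Fin n → ℂ) : ENNReal :=
  sSup {c : ENNReal | ∃ U, IsOpen U ∧ o ∈ U ∧ U ⊆ D ∧
    wtInt U F (fun z => ((2 * c : ENNReal) : EReal) * φ z) < ⊤}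

/-- The jumping number `c_{o,p}^F(φ) = sup{c ≥ 0 : |F|^p e^{-2cφ} is L¹ near o}`, in `[0,∞]`. -/
def jumpNumP {n : ℕ} (D : Set (Fin n → ℂ)) (F : (Fin n → ℂ) → ℂ) (p : ℝ)
    (φ : (Fin n → ℂ) → EReal) (o : Fin n → ℂ) : ENNReal :=
  sSup {c : ENNReal | ∃ U, IsOpen U ∧ o ∈ U ∧ U ⊆ D ∧
    wtIntP U F p (fun z => ((2 * c : ENNReal) : EReal) * φ z) < ⊤}

/-- `K_{φ,F}(o) = 1 / inf{∫_D |F̃|² : (F̃-F,o) ∈ I₊(2 c_o^F(φ) φ)_o, F̃ ∈ O(D)}`. -/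
def Kphi {n : ℕ} (D : Set (Fin n → ℂ)) (F : (Fin n → ℂ) → ℂ) (φ : (Fin n → ℂ) → EReal)
    (o : Fin n → ℂ) : ENNReal :=
  (sInf {I : ENNReal | ∃ G : (Fin n → ℂ) → ℂ, DifferentiableOn ℂ G D ∧
    MemMultIdealPlus D (fun z => ((2 * jumpNum D F φ o : ENNReal) : EReal) * φ z) o
      (fun z => G z - F z) ∧
    I = ∫⁻ z in D, (‖G z‖₊ : ENNReal) ^ 2})⁻¹

/-- `F₁ := F^{⌈p/2⌉}`. -/
def Fpow {n : ℕ} (F : (Fin n → ℂ) → ℂ) (p : ℝ) : (Fin n → ℂ) → ℂ :=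
  fun z => F z ^ (⌈p / 2⌉₊ : ℕ)

/-- `φ₁ := (2⌈p/2⌉ - p) log|F|`. -/
def phiOne {n : ℕ} (F : (Fin n → ℂ) → ℂ) (p : ℝ) : (Fin n → ℂ) → EReal :=
  fun z => ((2 * (⌈p / 2⌉₊ : ℝ) - p : ℝ) : EReal) * ENNReal.log (‖F z‖₊ : ENNReal)

/-- `K^{(p)}_{φ,F,a}(o) = 1 / inf{∫_D |F̃|² e^{-φ₁-(1-a)φ} :
(F̃-F₁,o) ∈ I(φ₁ + 2 c_{o,p}^F(φ) φ)_o, F̃ ∈ O(D)}`. -/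
def Kp {n : ℕ} (D : Set (Fin n → ℂ)) (F : (Fin n → ℂ) → ℂ) (φ : (Fin n → ℂ) → EReal)
    (o : Fin n → ℂ) (p a : ℝ) : ENNReal :=
  (sInf {I : ENNReal | ∃ G : (Fin n → ℂ) → ℂ, DifferentiableOn ℂ G D ∧
    MemMultIdeal D
      (fun z => phiOne F p z + ((2 * jumpNumP D F p φ o : ENNReal) : EReal) * φ z) o
      (fun z => G z - Fpow F p z) ∧
    I = wtInt D G (fun z => phiOne F p z + ((1 - a : ℝ) : EReal) * φ z)})⁻¹

/-- `K^{(2)}_{φ,F,a}(o) = 1 / inf{∫_D |F̃|² e^{-(1-a)φ} :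
(F̃-F,o) ∈ I(2 c_o^F(φ) φ)_o, F̃ ∈ O(D)}`. -/
def K2 {n : ℕ} (D : Set (Fin n → ℂ)) (F : (Fin n → ℂ) → ℂ) (φ : (Fin n → ℂ) → EReal)
    (o : Fin n → ℂ) (a : ℝ) : ENNReal :=
  (sInf {I : ENNReal | ∃ G : (Fin n → ℂ) → ℂ, DifferentiableOn ℂ G D ∧
    MemMultIdeal D (fun z => ((2 * jumpNum D F φ o : ENNReal) : EReal) * φ z) o
      (fun z => G z - F z) ∧
    I = wtInt D G (fun z => ((1 - a : ℝ) : EReal) * φ z)})⁻¹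

/-- The weighted Bergman kernel `K_{D,w}(o) = 1 / inf{∫_D |f|² e^{-w} : f ∈ O(D), f(o) = 1}`. -/
def Kbergman {n : ℕ} (D : Set (Fin n → ℂ)) (w : (Fin n → ℂ) → EReal) (o : Fin n → ℂ) :
    ENNReal :=
  (sInf {I : ENNReal | ∃ f : (Fin n → ℂ) → ℂ, DifferentiableOn ℂ f D ∧ f o = 1 ∧
    I = wtInt D f w})⁻¹

/-- `C_{F,I,Φ₁-Φ₂}(D) = inf{∫_D |F̃|² e^{-Φ₁+Φ₂} : (F̃-F,o) ∈ I, F̃ ∈ O(D)}`, where membership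
of the germ at `o` in `I` is expressed by the predicate `I` on representatives. -/
def Cinf {n : ℕ} (D : Set (Fin n → ℂ)) (F : (Fin n → ℂ) → ℂ)
    (I : ((Fin n → ℂ) → ℂ) → Prop) (Φ₁ Φ₂ : (Fin n → ℂ) → EReal) : ENNReal :=
  sInf {c : ENNReal | ∃ G : (Fin n → ℂ) → ℂ, DifferentiableOn ℂ G D ∧
    I (fun z => G z - F z) ∧
    c = ∫⁻ z in D, (‖G z‖₊ : ENNReal) ^ 2 * EReal.exp (-(Φ₁ z) + Φ₂ z)}

/-- The set whose supremum is `c_o^F(φ'; ψ) = sup{c ≥ 0 : |F|² e^{-φ'-(2c-1)ψ} is L¹ near o}`. -/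
def jumpSetRel {n : ℕ} (D : Set (Fin n → ℂ)) (F : (Fin n → ℂ) → ℂ)
    (φ' ψ : (Fin n → ℂ) → EReal) (o : Fin n → ℂ) : Set ℝ :=
  {c : ℝ | 0 ≤ c ∧ ∃ U, IsOpen U ∧ o ∈ U ∧ U ⊆ D ∧
    (∫⁻ z in U, (‖F z‖₊ : ENNReal) ^ 2 *
      EReal.exp (-(φ' z) - ((2 * c - 1 : ℝ) : EReal) * ψ z)) < ⊤}

/-- `I` is (the membership predicate, on representatives, of) an ideal of the local ring `O_o`
of germs of holomorphic functions at `o`. -/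
structure IsIdealGermAt {n : ℕ} (o : Fin n → ℂ) (I : ((Fin n → ℂ) → ℂ) → Prop) : Prop where
  congr : ∀ f g : (Fin n → ℂ) → ℂ, I f → f =ᶠ[nhds o] g → I g
  analyticAt : ∀ f : (Fin n → ℂ) → ℂ, I f → AnalyticAt ℂ f o
  zero_mem : I 0
  add_mem : ∀ f g : (Fin n → ℂ) → ℂ, I f → I g → I (f + g)
  smul_mem : ∀ f g : (Fin n → ℂ) → ℂ, AnalyticAt ℂ f o → I g → I (f * g)

open Metric Real
set_option maxHeartbeats 1000000

theorem my_lintegral_comp_polarCoord_symm (f : ℝ × ℝ → ENNReal) :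
    (∫⁻ p in polarCoord.target, ENNReal.ofReal p.1 * f (polarCoord.symm p)) = ∫⁻ p, f p := by
  set B : ℝ × ℝ → ℝ × ℝ →L[ℝ] ℝ × ℝ := fun p =>
    LinearMap.toContinuousLinearMap (Matrix.toLin (Module.Basis.finTwoProd ℝ) (Module.Basis.finTwoProd ℝ)
      !![Real.cos p.2, -p.1 * Real.sin p.2; Real.sin p.2, p.1 * Real.cos p.2])
  have A : ∀ p ∈ polarCoord.target, HasFDerivWithinAt polarCoord.symm (B p) polarCoord.target p :=
    fun p _ => (hasFDerivAt_polarCoord_symm p).hasFDerivWithinAt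
  have B_det : ∀ p, (B p).det = p.1 := by
    intro p
    conv_rhs => rw [← one_mul p.1, ← Real.cos_sq_add_sin_sq p.2]
    simp only [B, neg_mul, LinearMap.det_toContinuousLinearMap, LinearMap.det_toLin,
      Matrix.det_fin_two_of, sub_neg_eq_add]
    ring
  symm
  calc
    ∫⁻ p, f p = ∫⁻ p in polarCoord.source, f p := by
      rw [← setLIntegral_univ]
      exact setLIntegral_congr polarCoord_source_ae_eq_univ.symm
    _ = ∫⁻ p in polarCoord.symm '' polarCoord.target, f p := by
      rw [polarCoord.symm_image_target_eq_source]
    _ = ∫⁻ p in polarCoord.target, ENNReal.ofReal |(B p).det| * f (polarCoord.symm p) := by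
      exact lintegral_image_eq_lintegral_abs_det_fderiv_mul volume
        polarCoord.open_target.measurableSet A (polarCoord.symm.injOn) f
    _ = ∫⁻ p in polarCoord.target, ENNReal.ofReal p.1 * f (polarCoord.symm p) := by
      refine setLIntegral_congr_fun polarCoord.open_target.measurableSet
        (fun p hp => ?_)
      rw [B_det, abs_of_pos hp.1]

theorem my_Complex_lintegral_comp_polarCoord_symm (f : ℂ → ENNReal) :
    (∫⁻ p in polarCoord.target, ENNReal.ofReal p.1 * f (Complex.polarCoord.symm p)) =
      ∫⁻ p, f p := by
  rw [← (Complex.volume_preserving_equiv_real_prod.symm).lintegral_comp_emb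
    Complex.measurableEquivRealProd.symm.measurableEmbedding, ← my_lintegral_comp_polarCoord_symm]
  rfl


theorem circle_submean {g : ℂ → ℂ} {U : Set ℂ} (hU : IsOpen U) (hg : DifferentiableOn ℂ g U)
    {c : ℂ} {u : ℝ} (hu : 0 < u) (hsub : Metric.closedBall c u ⊆ U) :
    ENNReal.ofReal (2 * π) * (‖g c‖₊ : ENNReal) ≤
      ∫⁻ θ in Set.Ioo (-π) π, (‖g (circleMap c u θ)‖₊ : ENNReal) := by
  have hcl : closure (Metric.ball c u) = Metric.closedBall c u := closure_ball c hu.ne'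
  have hdc : DiffContOnCl ℂ g (Metric.ball c u) := by
    refine ⟨hg.mono (le_trans Metric.ball_subset_closedBall hsub), ?_⟩
    rw [hcl]
    exact (hg.continuousOn).mono hsub
  have key := hdc.two_pi_i_inv_smul_circleIntegral_sub_inv_smul (Metric.mem_ball_self hu)
  -- real bound
  have hcont : ContinuousOn (fun θ : ℝ => ‖g (circleMap c u θ)‖) (Set.uIcc (-π) π) := by
    refine ((hg.continuousOn.comp (continuous_circleMap c u).continuousOn ?_).norm)
    intro θ _
    refine hsub ?_
    simp only [Metric.mem_closedBall, Complex.dist_eq, circleMap_sub_center]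
    simp [abs_of_pos hu]
  have hnorm : ∀ θ : ℝ, ‖deriv (circleMap c u) θ • ((circleMap c u θ - c)⁻¹ • g (circleMap c u θ))‖
      = ‖g (circleMap c u θ)‖ := by
    intro θ
    rw [norm_smul, norm_smul, deriv_circleMap, circleMap_sub_center, norm_inv]
    simp only [norm_mul, norm_circleMap_zero, Complex.norm_I, mul_one,
      abs_of_pos hu]
    field_simp
  have hreal : 2 * π * ‖g c‖ ≤ ∫ θ in (0:ℝ)..(2*π), ‖g (circleMap c u θ)‖ := by
    have h1 : ‖g c‖ ≤ (2 * π)⁻¹ * ∫ θ in (0:ℝ)..(2*π), ‖g (circleMap c u θ)‖ := by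
      calc ‖g c‖ = ‖(2 * ↑π * I)⁻¹ • ∮ (z : ℂ) in C(c, u), (z - c)⁻¹ • g z‖ := by rw [key]
        _ = (2*π)⁻¹ * ‖∮ (z : ℂ) in C(c, u), (z - c)⁻¹ • g z‖ := by
            rw [norm_smul, norm_inv]
            congr 1
            simp [abs_of_pos Real.pi_pos]
        _ ≤ (2*π)⁻¹ * ∫ θ in (0:ℝ)..(2*π), ‖g (circleMap c u θ)‖ := by
            refine mul_le_mul_of_nonneg_left ?_ (by positivity)
            rw [circleIntegral]
            refine le_trans (intervalIntegral.norm_integral_le_integral_norm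
              (by positivity)) ?_
            refine le_of_eq (intervalIntegral.integral_congr fun θ _ => hnorm θ)
    calc 2 * π * ‖g c‖ ≤ 2 * π * ((2 * π)⁻¹ * ∫ θ in (0:ℝ)..(2*π), ‖g (circleMap c u θ)‖) :=
          mul_le_mul_of_nonneg_left h1 (by positivity)
      _ = ∫ θ in (0:ℝ)..(2*π), ‖g (circleMap c u θ)‖ := by
          rw [← mul_assoc, mul_inv_cancel₀ (by positivity), one_mul]
  have hper : Function.Periodic (fun θ : ℝ => ‖g (circleMap c u θ)‖) (2*π) := fun θ => by
    simp [periodic_circleMap c u θ]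
  have hshift : (∫ θ in (0:ℝ)..(2*π), ‖g (circleMap c u θ)‖)
      = ∫ θ in (-π)..π, ‖g (circleMap c u θ)‖ := by
    have := hper.intervalIntegral_add_eq 0 (-π)
    rw [zero_add] at this
    rw [this]
    congr 1
    ring
  -- to lintegral
  have hple : -π ≤ π := by linarith [Real.pi_pos]
  have hInt : IntervalIntegrable (fun θ : ℝ => ‖g (circleMap c u θ)‖) volume (-π) π := by
    exact hcont.intervalIntegrable
  have hIoc : (∫ θ in (-π)..π, ‖g (circleMap c u θ)‖)
      = ∫ θ in Set.Ioc (-π) π, ‖g (circleMap c u θ)‖ := intervalIntegral.integral_of_le hple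
  have hlin : ENNReal.ofReal (∫ θ in Set.Ioc (-π) π, ‖g (circleMap c u θ)‖)
      = ∫⁻ θ in Set.Ioc (-π) π, ENNReal.ofReal ‖g (circleMap c u θ)‖ := by
    refine ofReal_integral_eq_lintegral_ofReal ?_ ?_
    · rw [← IntegrableOn]
      exact (intervalIntegrable_iff_integrableOn_Ioc_of_le hple).mp hInt
    · exact Filter.Eventually.of_forall fun θ => norm_nonneg _
  have hIooIoc : (∫⁻ θ in Set.Ioo (-π) π, (‖g (circleMap c u θ)‖₊ : ENNReal))
      = ∫⁻ θ in Set.Ioc (-π) π, (‖g (circleMap c u θ)‖₊ : ENNReal) :=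
    setLIntegral_congr Ioo_ae_eq_Ioc
  calc ENNReal.ofReal (2 * π) * (‖g c‖₊ : ENNReal)
      = ENNReal.ofReal (2 * π * ‖g c‖) := by
        rw [← enorm_eq_nnnorm, ← ofReal_norm, ← ENNReal.ofReal_mul (by positivity)]
    _ ≤ ENNReal.ofReal (∫ θ in Set.Ioc (-π) π, ‖g (circleMap c u θ)‖) := by
        refine ENNReal.ofReal_le_ofReal ?_
        rw [← hIoc, ← hshift]; exact hreal
    _ = ∫⁻ θ in Set.Ioc (-π) π, ENNReal.ofReal ‖g (circleMap c u θ)‖ := hlin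
    _ = ∫⁻ θ in Set.Ioo (-π) π, (‖g (circleMap c u θ)‖₊ : ENNReal) := by
        rw [hIooIoc]
        refine lintegral_congr fun θ => ?_
        rw [ofReal_norm, enorm_eq_nnnorm]


theorem disc_submean {g : ℂ → ℂ} {U : Set ℂ} (hU : IsOpen U) (hg : DifferentiableOn ℂ g U)
    {c : ℂ} {t : ℝ} (ht : 0 < t) (hsub : Metric.closedBall c t ⊆ U)
    {C : ENNReal} (hC : C ≠ ⊤) {F : ℂ → ENNReal} (hF : Measurable F)
    (hbd : ∀ w ∈ Metric.closedBall c t, C * (‖g w‖₊ : ENNReal) ≤ F w) :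
    ENNReal.ofReal (π * t^2) * (C * (‖g c‖₊ : ENNReal)) ≤
      ∫⁻ w in Metric.closedBall c t, F w := by
  have hsymm : ∀ u θ : ℝ, c + Complex.polarCoord.symm (u, θ) = circleMap c u θ := by
    intro u θ
    rw [Complex.polarCoord_symm_apply, circleMap, Complex.exp_mul_I]
    push_cast
    ring
  set F' : ℂ → ENNReal := (Metric.closedBall c t).indicator F with hF'def
  have hF' : Measurable F' := hF.indicator measurableSet_closedBall
  have hcontsymm : Continuous fun p : ℝ × ℝ => Complex.polarCoord.symm p := by
    simp only [Complex.polarCoord_symm_apply]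
    exact (Complex.continuous_ofReal.comp continuous_fst).mul
      (((Complex.continuous_ofReal.comp (Real.continuous_cos.comp continuous_snd))).add
        ((Complex.continuous_ofReal.comp (Real.continuous_sin.comp continuous_snd)).mul
          continuous_const))
  have hmeas : Measurable fun p : ℝ × ℝ =>
      ENNReal.ofReal p.1 * F' (c + Complex.polarCoord.symm p) :=
    (measurable_fst.ennreal_ofReal).mul
      (hF'.comp ((continuous_const.add hcontsymm).measurable))
  have h1 : (∫⁻ w in Metric.closedBall c t, F w) = ∫⁻ w, F' w := by
    rw [hF'def, lintegral_indicator measurableSet_closedBall]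
  have h2 : (∫⁻ w, F' w) = ∫⁻ w, F' (c + w) := (lintegral_add_left_eq_self (fun w => F' w) c).symm
  have h3 : (∫⁻ w, F' (c + w)) =
      ∫⁻ p in polarCoord.target, ENNReal.ofReal p.1 * F' (c + Complex.polarCoord.symm p) :=
    (my_Complex_lintegral_comp_polarCoord_symm _).symm
  have h4 : (∫⁻ p in polarCoord.target, ENNReal.ofReal p.1 * F' (c + Complex.polarCoord.symm p))
      = ∫⁻ u in Set.Ioi (0:ℝ), ∫⁻ θ in Set.Ioo (-π) π,
          ENNReal.ofReal u * F' (c + Complex.polarCoord.symm (u, θ)) := by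
    rw [polarCoord_target, Measure.volume_eq_prod, ← Measure.prod_restrict,
      lintegral_prod _ hmeas.aemeasurable]
  have h5 : (∫⁻ u in Set.Ioi (0:ℝ), ∫⁻ θ in Set.Ioo (-π) π,
          ENNReal.ofReal u * F' (c + Complex.polarCoord.symm (u, θ)))
      ≥ ∫⁻ u in Set.Ioc (0:ℝ) t, ∫⁻ θ in Set.Ioo (-π) π,
          ENNReal.ofReal u * F' (c + Complex.polarCoord.symm (u, θ)) :=
    lintegral_mono' (Measure.restrict_mono Set.Ioc_subset_Ioi_self le_rfl) le_rfl
  have h6 : ∀ u ∈ Set.Ioc (0:ℝ) t,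
      (∫⁻ θ in Set.Ioo (-π) π, ENNReal.ofReal u * F' (c + Complex.polarCoord.symm (u, θ)))
      ≥ ENNReal.ofReal u * C * (ENNReal.ofReal (2*π) * (‖g c‖₊ : ENNReal)) := by
    intro u hu
    have hmem : ∀ θ : ℝ, circleMap c u θ ∈ Metric.closedBall c t := by
      intro θ
      simp only [Metric.mem_closedBall, Complex.dist_eq, circleMap_sub_center]
      simp only [norm_circleMap_zero]
      rw [abs_of_pos hu.1]; exact hu.2
    have hstep : ∀ θ : ℝ, ENNReal.ofReal u * C * (‖g (circleMap c u θ)‖₊ : ENNReal)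
        ≤ ENNReal.ofReal u * F' (c + Complex.polarCoord.symm (u, θ)) := by
      intro θ
      rw [hsymm u θ, hF'def, Set.indicator_of_mem (hmem θ), mul_assoc]
      exact mul_le_mul_right (hbd _ (hmem θ)) _
    calc ENNReal.ofReal u * C * (ENNReal.ofReal (2*π) * (‖g c‖₊ : ENNReal))
        ≤ ENNReal.ofReal u * C *
            (∫⁻ θ in Set.Ioo (-π) π, (‖g (circleMap c u θ)‖₊ : ENNReal)) :=
          mul_le_mul_right (circle_submean hU hg hu.1
            ((Metric.closedBall_subset_closedBall hu.2).trans hsub)) _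
      _ = ∫⁻ θ in Set.Ioo (-π) π, ENNReal.ofReal u * C * (‖g (circleMap c u θ)‖₊ : ENNReal) :=
          (lintegral_const_mul' _ _ (ENNReal.mul_ne_top ENNReal.ofReal_ne_top hC)).symm
      _ ≤ ∫⁻ θ in Set.Ioo (-π) π, ENNReal.ofReal u * F' (c + Complex.polarCoord.symm (u, θ)) :=
          lintegral_mono fun θ => hstep θ
  have h7 : (∫⁻ u in Set.Ioc (0:ℝ) t, ∫⁻ θ in Set.Ioo (-π) π,
          ENNReal.ofReal u * F' (c + Complex.polarCoord.symm (u, θ)))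
      ≥ ∫⁻ u in Set.Ioc (0:ℝ) t, ENNReal.ofReal u * (C * (ENNReal.ofReal (2*π) * (‖g c‖₊ : ENNReal))) := by
    refine setLIntegral_mono_ae ?_ (Filter.Eventually.of_forall fun u hu => ?_)
    · refine (Measurable.lintegral_prod_right' (f := fun q : ℝ × ℝ =>
        ENNReal.ofReal q.1 * F' (c + Complex.polarCoord.symm q)) ?_).aemeasurable
      exact hmeas
    · rw [← mul_assoc]
      exact h6 u hu
  have h8 : (∫⁻ u in Set.Ioc (0:ℝ) t, ENNReal.ofReal u) = ENNReal.ofReal (t^2/2) := by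
    rw [← ofReal_integral_eq_lintegral_ofReal (f := fun u : ℝ => u)
      (μ := volume.restrict (Set.Ioc (0:ℝ) t))
      (continuous_id.integrableOn_Ioc)
      ((ae_restrict_iff' measurableSet_Ioc).2 (Filter.Eventually.of_forall fun u hu => hu.1.le))]
    congr 1
    rw [← intervalIntegral.integral_of_le ht.le, integral_id]
    ring
  have hK : C * (ENNReal.ofReal (2*π) * (‖g c‖₊ : ENNReal)) ≠ ⊤ :=
    ENNReal.mul_ne_top hC (ENNReal.mul_ne_top ENNReal.ofReal_ne_top ENNReal.coe_ne_top)
  calc ENNReal.ofReal (π * t^2) * (C * (‖g c‖₊ : ENNReal))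
      = ENNReal.ofReal (t^2/2) * (C * (ENNReal.ofReal (2*π) * (‖g c‖₊ : ENNReal))) := by
        have he : ENNReal.ofReal (π*t^2) = ENNReal.ofReal (t^2/2) * ENNReal.ofReal (2*π) := by
          rw [← ENNReal.ofReal_mul (by positivity)]; congr 1; ring
        rw [he]; ring
    _ = ∫⁻ u in Set.Ioc (0:ℝ) t,
          ENNReal.ofReal u * (C * (ENNReal.ofReal (2*π) * (‖g c‖₊ : ENNReal))) := by
        rw [lintegral_mul_const' _ _ hK, h8]
    _ ≤ ∫⁻ u in Set.Ioc (0:ℝ) t, ∫⁻ θ in Set.Ioo (-π) π,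
          ENNReal.ofReal u * F' (c + Complex.polarCoord.symm (u, θ)) := h7
    _ ≤ ∫⁻ u in Set.Ioi (0:ℝ), ∫⁻ θ in Set.Ioo (-π) π,
          ENNReal.ofReal u * F' (c + Complex.polarCoord.symm (u, θ)) := h5
    _ = ∫⁻ w in Metric.closedBall c t, F w := by rw [← h4, ← h3, ← h2, ← h1]


theorem polydisc_submean : ∀ {n : ℕ} (G : (Fin n → ℂ) → ℂ) (U : Set (Fin n → ℂ)),
    IsOpen U → DifferentiableOn ℂ G U → ∀ (z : Fin n → ℂ) (t : ℝ), 0 < t →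
    Metric.closedBall z t ⊆ U → ∀ (F : (Fin n → ℂ) → ENNReal), Measurable F →
    (∀ w ∈ Metric.closedBall z t, (‖G w‖₊ : ENNReal) ≤ F w) →
    (ENNReal.ofReal (π * t^2))^n * (‖G z‖₊ : ENNReal) ≤ ∫⁻ w in Metric.closedBall z t, F w := by
  intro n
  induction n with
  | zero =>
    intro G U hU hG z t ht hsub F hF hbd
    have hball : Metric.closedBall z t = Set.univ := by
      ext w
      simp [Metric.mem_closedBall, Subsingleton.elim w z, ht.le]
    have hFconst : F = fun _ => F z := funext fun w => congrArg F (Subsingleton.elim w z)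
    rw [hball, pow_zero, one_mul, Measure.restrict_univ, hFconst, lintegral_const]
    have hvol : (volume : Measure (Fin 0 → ℂ)) Set.univ = 1 := by
      rw [MeasureTheory.volume_pi, Measure.pi_univ]
      simp
    rw [hvol, mul_one]
    exact hbd z (by rw [hball]; trivial)
  | succ n ih =>
    intro G U hU hG z t ht hsub F hF hbd
    set e := MeasurableEquiv.piFinSuccAbove (fun _ : Fin (n+1) => ℂ) 0 with he
    have hsymm : ∀ (x : ℂ) (y : Fin n → ℂ), e.symm (x, y) = Fin.cons x y := by
      intro x y
      have h : e.symm (x, y) = Fin.insertNth 0 x y := rfl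
      rw [h, Fin.insertNth_zero]
      simp
    have hconsmem : ∀ (x : ℂ) (y : Fin n → ℂ), x ∈ Metric.closedBall (z 0) t →
        y ∈ Metric.closedBall (Fin.tail z) t → Fin.cons x y ∈ Metric.closedBall z t := by
      intro x y hx hy
      rw [Metric.mem_closedBall] at *
      rw [dist_pi_le_iff ht.le]
      intro i
      refine Fin.cases ?_ ?_ i
      · simpa using hx
      · intro j
        simp only [Fin.cons_succ]
        exact (dist_pi_le_iff ht.le).mp hy j
    have hpre : e.symm ⁻¹' (Metric.closedBall z t) =
        (Metric.closedBall (z 0) t) ×ˢ (Metric.closedBall (Fin.tail z) t) := by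
      ext ⟨x, y⟩
      simp only [Set.mem_preimage, hsymm, Set.mem_prod]
      constructor
      · intro h
        rw [Metric.mem_closedBall] at h
        have hco := (dist_pi_le_iff ht.le).mp h
        constructor
        · rw [Metric.mem_closedBall]
          simpa using hco 0
        · rw [Metric.mem_closedBall, dist_pi_le_iff ht.le]
          intro j
          simpa [Fin.tail] using hco j.succ
      · rintro ⟨hx, hy⟩
        exact hconsmem x y hx hy
    have hMP : MeasurePreserving e.symm volume volume :=
      (volume_preserving_piFinSuccAbove (fun _ : Fin (n+1) => ℂ) 0).symm e
    have h0 : (∫⁻ w in Metric.closedBall z t, F w) = ∫⁻ q in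
        (Metric.closedBall (z 0) t) ×ˢ (Metric.closedBall (Fin.tail z) t), F (e.symm q) := by
      rw [← hMP.setLIntegral_comp_preimage_emb e.symm.measurableEmbedding F (Metric.closedBall z t),
        hpre]
    have hconsmeas : Measurable fun q : ℂ × (Fin n → ℂ) => (Fin.cons q.1 q.2 : Fin (n+1) → ℂ) := by
      rw [measurable_pi_iff]
      intro i
      refine Fin.cases ?_ ?_ i
      · simpa using measurable_fst
      · intro j
        simpa [Function.comp_def] using (measurable_pi_apply j).comp measurable_snd
    have h1 : (∫⁻ q in (Metric.closedBall (z 0) t) ×ˢ (Metric.closedBall (Fin.tail z) t),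
        F (e.symm q)) = ∫⁻ x in Metric.closedBall (z 0) t,
          ∫⁻ y in Metric.closedBall (Fin.tail z) t, F (Fin.cons x y) := by
      have : (fun q : ℂ × (Fin n → ℂ) => F (e.symm q)) =
          fun q => F (Fin.cons q.1 q.2) := funext fun q => by rw [hsymm q.1 q.2]
      rw [Measure.volume_eq_prod, ← Measure.prod_restrict, this,
        lintegral_prod (fun q : ℂ × (Fin n → ℂ) => F (Fin.cons q.1 q.2))
          ((hF.comp hconsmeas).aemeasurable)]
    -- inner estimate by induction
    have h2 : ∀ x ∈ Metric.closedBall (z 0) t,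
        (ENNReal.ofReal (π * t^2))^n * (‖G (Fin.cons x (Fin.tail z))‖₊ : ENNReal) ≤
          ∫⁻ y in Metric.closedBall (Fin.tail z) t, F (Fin.cons x y) := by
      intro x hx
      have hcons : Continuous fun y : Fin n → ℂ => (Fin.cons x y : Fin (n+1) → ℂ) := by
        rw [continuous_pi_iff]
        intro i
        refine Fin.cases ?_ ?_ i
        · simpa using continuous_const
        · intro j
          simpa using continuous_apply j
      have hdiff : Differentiable ℂ fun y : Fin n → ℂ => (Fin.cons x y : Fin (n+1) → ℂ) := by
        rw [differentiable_pi]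
        intro i
        refine Fin.cases ?_ ?_ i
        · simpa using differentiable_const x
        · intro j
          simp only [Fin.cons_succ]
          exact (ContinuousLinearMap.proj (R := ℂ) (φ := fun _ : Fin n => ℂ) j).differentiable
      refine ih (fun y => G (Fin.cons x y)) ((fun y : Fin n → ℂ => (Fin.cons x y : Fin (n+1) → ℂ)) ⁻¹' U)
        (hU.preimage hcons) (hG.comp hdiff.differentiableOn (fun y hy => hy))
        (Fin.tail z) t ht ?_ (fun y => F (Fin.cons x y)) (hF.comp hcons.measurable) ?_
      · intro y hy
        exact hconsmem x y hx hy |> fun h => hsub h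
      · intro y hy
        exact hbd _ (hconsmem x y hx hy)
    -- outer estimate by disc_submean
    have houter : ENNReal.ofReal (π * t^2) *
        ((ENNReal.ofReal (π * t^2))^n * (‖G (Fin.cons (z 0) (Fin.tail z))‖₊ : ENNReal)) ≤
          ∫⁻ x in Metric.closedBall (z 0) t,
            ∫⁻ y in Metric.closedBall (Fin.tail z) t, F (Fin.cons x y) := by
      have hslice : Continuous fun x : ℂ => (Fin.cons x (Fin.tail z) : Fin (n+1) → ℂ) := by
        rw [continuous_pi_iff]
        intro i
        refine Fin.cases ?_ ?_ i
        · simpa using (continuous_id' : Continuous fun a : ℂ => a)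
        · intro j
          simpa using continuous_const
      have hdiff : Differentiable ℂ fun x : ℂ => (Fin.cons x (Fin.tail z) : Fin (n+1) → ℂ) := by
        rw [differentiable_pi]
        intro i
        refine Fin.cases ?_ ?_ i
        · simpa using differentiable_id
        · intro j
          simpa using differentiable_const (Fin.tail z j)
      have hFmeas : Measurable fun x : ℂ =>
          ∫⁻ y in Metric.closedBall (Fin.tail z) t, F (Fin.cons x y) :=
        Measurable.lintegral_prod_right' (f := fun q : ℂ × (Fin n → ℂ) => F (Fin.cons q.1 q.2))
          (hF.comp hconsmeas)
      refine disc_submean (g := fun x => G (Fin.cons x (Fin.tail z)))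
        (U := (fun x : ℂ => (Fin.cons x (Fin.tail z) : Fin (n+1) → ℂ)) ⁻¹' U)
        (hU.preimage hslice) (hG.comp hdiff.differentiableOn (fun y hy => hy)) ht ?_
        (ENNReal.pow_ne_top ENNReal.ofReal_ne_top) hFmeas h2
      · intro x hx
        refine hsub (hconsmem x (Fin.tail z) hx ?_)
        simp [Metric.mem_closedBall, ht.le, dist_self]
    calc (ENNReal.ofReal (π * t^2))^(n+1) * (‖G z‖₊ : ENNReal)
        = ENNReal.ofReal (π * t^2) *
          ((ENNReal.ofReal (π * t^2))^n * (‖G (Fin.cons (z 0) (Fin.tail z))‖₊ : ENNReal)) := by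
          rw [Fin.cons_self_tail]; ring
      _ ≤ ∫⁻ x in Metric.closedBall (z 0) t,
            ∫⁻ y in Metric.closedBall (Fin.tail z) t, F (Fin.cons x y) := houter
      _ = ∫⁻ w in Metric.closedBall z t, F w := by rw [← h1, ← h0]


theorem measurable_psi {n : ℕ} {Φ : (Fin n → ℂ) → EReal} {D : Set (Fin n → ℂ)}
    (hD : IsOpen D) (husc : UpperSemicontinuousOn Φ D) :
    Measurable (D.indicator Φ) := by
  classical
  apply measurable_of_Iio
  intro c
  have hopen : IsOpen {z | z ∈ D ∧ Φ z < c} := by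
    rw [isOpen_iff_mem_nhds]
    rintro z ⟨hzD, hzc⟩
    have h1 : ∀ᶠ w in nhds z, Φ w < c := by
      have h2 := husc z hzD c hzc
      rwa [nhdsWithin_eq_nhds.2 (hD.mem_nhds hzD)] at h2
    filter_upwards [h1, hD.mem_nhds hzD] with w hw1 hw2
    exact ⟨hw2, hw1⟩
  by_cases hbot : (0 : EReal) < c
  · have h : (D.indicator Φ) ⁻¹' (Set.Iio c) = {z | z ∈ D ∧ Φ z < c} ∪ Dᶜ := by
      ext z
      by_cases hz : z ∈ D <;>
        simp [Set.indicator_of_mem, Set.indicator_of_notMem, hz, hbot]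
    rw [h]
    exact hopen.measurableSet.union hD.isClosed_compl.measurableSet
  · have h : (D.indicator Φ) ⁻¹' (Set.Iio c) = {z | z ∈ D ∧ Φ z < c} := by
      ext z
      by_cases hz : z ∈ D <;>
        simp [Set.indicator_of_mem, Set.indicator_of_notMem, hz, hbot]
    rw [h]
    exact hopen.measurableSet

theorem pointwise_holder {g : ENNReal} {x : EReal} {a s : ℝ}
    (ha0 : 0 < a) (ha1 : a < 1) (hs : s = a / (2 - a)) (hx : x ≠ ⊥) (hxtop : x = ⊤ → g = 0) :
    g ^ (a : ℝ) ≤ (g ^ 2 * EReal.exp x) ^ (a / 2) *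
      (EReal.exp (-((s : EReal) * x))) ^ ((2 - a) / 2) := by
  have h2a : (0:ℝ) < 2 - a := by linarith
  induction x with
  | bot => exact absurd rfl hx
  | top =>
    rw [hxtop rfl]
    rw [ENNReal.zero_rpow_of_pos ha0]
    exact zero_le
  | coe r =>
    have hmul : -((s : EReal) * (r : EReal)) = ((-(s * r) : ℝ) : EReal) := by
      rw [← EReal.coe_mul, ← EReal.coe_neg]
    rw [hmul, EReal.exp_coe, EReal.exp_coe]
    rw [ENNReal.mul_rpow_of_nonneg _ _ (by positivity)]
    have hg2 : (g ^ (2:ℕ) : ENNReal) = g ^ ((2:ℕ) : ℝ) := (ENNReal.rpow_natCast g 2).symm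
    rw [hg2, ← ENNReal.rpow_mul g]
    have h2a2 : ((2:ℕ):ℝ) * (a/2) = a := by push_cast; ring
    rw [h2a2]
    rw [ENNReal.ofReal_rpow_of_pos (Real.exp_pos r), ENNReal.ofReal_rpow_of_pos (Real.exp_pos _)]
    rw [← Real.exp_mul, ← Real.exp_mul]
    rw [mul_assoc, ← ENNReal.ofReal_mul (by positivity), ← Real.exp_add]
    have hzero : r * (a/2) + -(s*r) * ((2-a)/2) = 0 := by
      rw [hs]
      field_simp
      ring
    rw [hzero, Real.exp_zero, ENNReal.ofReal_one, mul_one]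


/-- The pointwise estimate of the Appendix: on `D'' ⊂⊂ D' ⊂⊂ D`, if `e^{-sΦ₂}` is integrable
on `D'` for all small `s ≥ 0`, then `|G(z)|² ≤ C₃ ∫_{D'} |G|² e^{Φ₂}` for all `G ∈ O(D)` and
`z ∈ D''`. -/
theorem pointwise_estimate
    {n : ℕ} (D D' D'' : Set (Fin n → ℂ)) (Φ₂ : (Fin n → ℂ) → EReal)
    (hD : IsOpen D) (hDc : IsConnected D)
    (hΦ₂ : PlurisubharmonicOn Φ₂ D) (hΦ₂ne : ∃ z ∈ D, Φ₂ z ≠ ⊥)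
    (hD' : IsOpen D') (hD'' : IsOpen D'')
    (hD'c : IsCompact (closure D')) (hD''c : IsCompact (closure D''))
    (hsub1 : closure D'' ⊆ D') (hsub2 : closure D' ⊆ D)
    (hs : ∃ s₀ : ℝ, 0 < s₀ ∧ ∀ s : ℝ, 0 ≤ s → s < s₀ →
      (∫⁻ z in D', EReal.exp (-(((s : ℝ) : EReal) * Φ₂ z))) < ⊤) :
    ∃ C₃ : ℝ, 0 < C₃ ∧ ∀ G : (Fin n → ℂ) → ℂ, DifferentiableOn ℂ G D →
      ∀ z ∈ D'', (‖G z‖₊ : ENNReal) ^ 2 ≤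
        ENNReal.ofReal C₃ * ∫⁻ w in D', (‖G w‖₊ : ENNReal) ^ 2 * EReal.exp (Φ₂ w) := by
  classical
  obtain ⟨s₀, hs₀pos, hs₀⟩ := hs
  have hamin : 0 < min s₀ 1 := lt_min hs₀pos one_pos
  set a : ℝ := min s₀ 1 / 2 with ha_def
  have ha0 : 0 < a := div_pos hamin two_pos
  have ha1 : a < 1 := by
    have h := min_le_right s₀ 1
    rw [ha_def]; linarith
  have h2a : (0:ℝ) < 2 - a := by linarith
  set s : ℝ := a / (2 - a) with hs_def
  have hs_pos : 0 < s := div_pos ha0 h2a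
  have hs_lt : s < s₀ := by
    have hle : s ≤ a := by
      rw [hs_def, div_le_iff₀ h2a]
      nlinarith
    have h := min_le_left s₀ 1
    have h2 : a < s₀ := by rw [ha_def]; linarith
    linarith
  set Ψ : (Fin n → ℂ) → EReal := D.indicator Φ₂ with hΨdef
  have hΨmeas : Measurable Ψ := measurable_psi hD hΦ₂.1
  have hΨD : ∀ z ∈ D, Ψ z = Φ₂ z := fun z hz => Set.indicator_of_mem hz Φ₂
  have hD'subD : D' ⊆ D := subset_closure.trans hsub2
  have hexpΨmeas : Measurable fun w => EReal.exp (Ψ w) :=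
    EReal.exp_monotone.measurable.comp hΨmeas
  have hanti : Antitone fun x : EReal => EReal.exp (-((s:EReal) * x)) := by
    intro x y hxy
    apply EReal.exp_monotone
    rw [EReal.neg_le_neg_iff]
    exact mul_le_mul_of_nonneg_left hxy (by exact_mod_cast hs_pos.le)
  have hexpsΨmeas : Measurable fun w => EReal.exp (-((s:EReal) * Ψ w)) :=
    hanti.measurable.comp hΨmeas
  set M : ENNReal := ∫⁻ w in D', EReal.exp (-((s:EReal) * Ψ w)) with hMdef
  have hMlt : M < ⊤ := by
    have h1 := hs₀ s hs_pos.le hs_lt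
    have h2 : M = ∫⁻ z in D', EReal.exp (-(((s : ℝ) : EReal) * Φ₂ z)) := by
      rw [hMdef]
      exact setLIntegral_congr_fun hD'.measurableSet
        (fun w hw => by rw [hΨD w (hD'subD hw)])
    rw [h2]; exact h1
  rcases Set.eq_empty_or_nonempty D'' with hDe | hDne
  · refine ⟨1, one_pos, fun G _ z hz => ?_⟩
    rw [hDe] at hz
    exact absurd hz (Set.notMem_empty z)
  obtain ⟨z₁, hz₁⟩ := hDne
  have hz₁D' : z₁ ∈ D' := hsub1 (subset_closure hz₁)
  rcases Set.eq_empty_or_nonempty D'ᶜ with hCe | hCne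
  · -- subsingleton / n = 0 branch
    have hD'univ : D' = Set.univ := Set.compl_empty_iff.1 hCe
    have hn0 : n = 0 := by
      by_contra hn
      have hne : Nonempty (Fin n) := ⟨⟨0, Nat.pos_of_ne_zero hn⟩⟩
      haveI : Nontrivial (Fin n → ℂ) := ⟨⟨0, fun _ => 1, fun h => by
        have h2 := congrFun h hne.some
        simp at h2⟩⟩
      have hb : ¬ Bornology.IsBounded (Set.univ : Set (Fin n → ℂ)) :=
        NormedSpace.unbounded_univ ℂ _
      apply hb
      have h3 : closure D' = Set.univ := by rw [hD'univ, closure_univ]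
      exact h3 ▸ hD'c.isBounded
    subst hn0
    have hz₁D : z₁ ∈ D := hD'subD hz₁D'
    have hvol : (volume : Measure (Fin 0 → ℂ)) Set.univ = 1 := by
      rw [MeasureTheory.volume_pi, Measure.pi_univ]; simp
    have hbot : Φ₂ z₁ ≠ ⊥ := by
      intro hb
      have h1 := hs₀ s hs_pos.le hs_lt
      have h2 : (∫⁻ z in D', EReal.exp (-(((s:ℝ):EReal) * Φ₂ z))) = ⊤ := by
        have hconst : ∀ z : Fin 0 → ℂ, EReal.exp (-(((s:ℝ):EReal) * Φ₂ z)) = ⊤ := fun z => by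
          rw [Subsingleton.elim z z₁, hb, EReal.coe_mul_bot_of_pos hs_pos, EReal.neg_bot,
            EReal.exp_top]
        calc (∫⁻ z in D', EReal.exp (-(((s:ℝ):EReal) * Φ₂ z)))
            = ∫⁻ _ in D', (⊤:ENNReal) := setLIntegral_congr_fun hD'.measurableSet
              (fun z _ => hconst z)
          _ = ⊤ * volume D' := setLIntegral_const _ _
          _ = ⊤ := by rw [hD'univ, hvol, mul_one]
      rw [h2] at h1; exact absurd h1 (lt_irrefl ⊤)
    set x : ENNReal := EReal.exp (Φ₂ z₁) with hxdef
    have hxpos : 0 < x := EReal.zero_lt_exp_iff.2 (Ne.bot_lt hbot)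
    have hxinv : x⁻¹ ≠ ⊤ := ENNReal.inv_ne_top.2 hxpos.ne'
    refine ⟨(x⁻¹).toReal + 1, by positivity, ?_⟩
    intro G hGdiff z hz
    have hzz : z = z₁ := Subsingleton.elim z z₁
    have hRHS : (∫⁻ w in D', (‖G w‖₊:ENNReal)^2 * EReal.exp (Φ₂ w))
        = (‖G z₁‖₊:ENNReal)^2 * x := by
      calc (∫⁻ w in D', (‖G w‖₊:ENNReal)^2 * EReal.exp (Φ₂ w))
          = ∫⁻ _ in D', (‖G z₁‖₊:ENNReal)^2 * x := setLIntegral_congr_fun hD'.measurableSet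
            (fun w _ => by rw [Subsingleton.elim w z₁, hxdef])
        _ = ((‖G z₁‖₊:ENNReal)^2 * x) * volume D' := setLIntegral_const _ _
        _ = (‖G z₁‖₊:ENNReal)^2 * x := by rw [hD'univ, hvol, mul_one]
    rw [hRHS, hzz]
    have hC1 : (1:ENNReal) ≤ ENNReal.ofReal ((x⁻¹).toReal + 1) * x := by
      rcases eq_or_ne x ⊤ with hxt | hxt
      · rw [hxt, ENNReal.mul_top (by
          refine (ENNReal.ofReal_pos.2 ?_).ne'
          positivity)]
        exact le_top
      · have h2 : x⁻¹ ≤ ENNReal.ofReal ((x⁻¹).toReal + 1) := by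
          calc x⁻¹ = ENNReal.ofReal (x⁻¹).toReal := (ENNReal.ofReal_toReal hxinv).symm
            _ ≤ _ := ENNReal.ofReal_le_ofReal (by linarith)
        calc (1:ENNReal) = x⁻¹ * x := (ENNReal.inv_mul_cancel hxpos.ne' hxt).symm
          _ ≤ _ := mul_le_mul_left h2 x
    calc (‖G z₁‖₊:ENNReal)^2 = 1 * (‖G z₁‖₊:ENNReal)^2 := (one_mul _).symm
      _ ≤ (ENNReal.ofReal ((x⁻¹).toReal + 1) * x) * (‖G z₁‖₊:ENNReal)^2 :=
          mul_le_mul_left hC1 _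
      _ = ENNReal.ofReal ((x⁻¹).toReal + 1) * ((‖G z₁‖₊:ENNReal)^2 * x) := by ring
  -- main branch
  · have hn : 0 < n := by
      rcases Nat.eq_zero_or_pos n with h0 | hpos
      · exfalso
        subst h0
        obtain ⟨w, hw⟩ := hCne
        exact hw (by rw [Subsingleton.elim w z₁]; exact hz₁D')
      · exact hpos
    have hnR : (0:ℝ) < n := by exact_mod_cast hn
    set β : ℝ := 2*n/a with hβdef
    have hβpos : 0 < β := div_pos (by linarith) ha0
    have hβa : β * a = 2*(n:ℝ) := by rw [hβdef]; field_simp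
    -- δ
    have hcont_d : Continuous fun w : Fin n → ℂ => Metric.infDist w D'ᶜ :=
      Metric.continuous_infDist_pt _
    obtain ⟨zδ, hzδmem, hzδmin⟩ := hD''c.exists_isMinOn ⟨z₁, subset_closure hz₁⟩
      hcont_d.continuousOn
    set δ : ℝ := Metric.infDist zδ D'ᶜ with hδdef
    have hδpos : 0 < δ := by
      rw [hδdef]
      refine (hD'.isClosed_compl.notMem_iff_infDist_pos hCne).1 ?_
      simpa using hsub1 hzδmem
    have hδle : ∀ w ∈ closure D'', δ ≤ Metric.infDist w D'ᶜ := fun w hw =>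
      (isMinOn_iff.1 hzδmin) w hw
    -- constants
    set mm : ℝ := M.toReal with hmmdef
    set C₂ : ℝ := ((2:ℝ)^β / π^n * mm^((2-a)/2))^(2/a) with hC₂def
    have hC₂nonneg : 0 ≤ C₂ := by
      rw [hC₂def]
      refine Real.rpow_nonneg ?_ _
      positivity
    refine ⟨δ^(-(2*β)) * C₂ + 1, by positivity, ?_⟩
    intro G hG z hz
    have hGcontD : ContinuousOn G D := hG.continuousOn
    set Gnn : (Fin n → ℂ) → ENNReal := D.piecewise (fun w => (‖G w‖₊ : ENNReal)) 0 with hGnndef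
    have hGnnmeas : Measurable Gnn := by
      refine ContinuousOn.measurable_piecewise ?_ continuousOn_const hD.measurableSet
      exact ENNReal.continuous_coe.comp_continuousOn hGcontD.nnnorm
    have hGnnD : ∀ w ∈ D, Gnn w = (‖G w‖₊ : ENNReal) := by
      intro w hw
      rw [hGnndef]
      exact Set.piecewise_eq_of_mem _ _ _ hw
    have hGnnne : ∀ w, Gnn w ≠ ⊤ := by
      intro w
      rw [hGnndef]
      by_cases h : w ∈ D
      · rw [Set.piecewise_eq_of_mem _ _ _ h]; exact ENNReal.coe_ne_top
      · rw [Set.piecewise_eq_of_notMem _ _ _ h]; simp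
    set J : ENNReal := ∫⁻ w in D', Gnn w ^ 2 * EReal.exp (Ψ w) with hJdef
    have hJeq : (∫⁻ w in D', (‖G w‖₊:ENNReal)^2 * EReal.exp (Φ₂ w)) = J := by
      rw [hJdef]
      exact setLIntegral_congr_fun hD'.measurableSet
        (fun w hw => by
          rw [hGnnD w (hD'subD hw), hΨD w (hD'subD hw)])
    rw [hJeq]
    rcases eq_top_or_lt_top J with hJtop | hJlt
    · rw [hJtop, ENNReal.mul_top (by
        refine (ENNReal.ofReal_pos.2 ?_).ne'
        positivity)]
      exact le_top
    -- the maximum point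
    have hGcont' : ContinuousOn (fun w => (Metric.infDist w D'ᶜ)^β * ‖G w‖) (closure D') := by
      refine ContinuousOn.mul ?_ ((hGcontD.mono hsub2).norm)
      exact (hcont_d.rpow_const fun w => Or.inr hβpos.le).continuousOn
    obtain ⟨z₀, hz₀mem, hz₀max⟩ := hD'c.exists_isMaxOn ⟨z₁, subset_closure hz₁D'⟩ hGcont'
    set m : ℝ := (Metric.infDist z₀ D'ᶜ)^β * ‖G z₀‖ with hmdef
    have hm_ge : ∀ w ∈ closure D', (Metric.infDist w D'ᶜ)^β * ‖G w‖ ≤ m := fun w hw =>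
      (isMaxOn_iff.1 hz₀max) w hw
    have hδβpos : 0 < δ^β := Real.rpow_pos_of_pos hδpos β
    have hzbd' : δ^β * ‖G z‖ ≤ m := by
      calc δ^β * ‖G z‖ ≤ (Metric.infDist z D'ᶜ)^β * ‖G z‖ :=
            mul_le_mul_of_nonneg_right
              (Real.rpow_le_rpow hδpos.le (hδle z (subset_closure hz)) hβpos.le) (norm_nonneg _)
        _ ≤ m := hm_ge z (subset_closure (hsub1 (subset_closure hz)))
    rcases le_or_gt m 0 with hm0 | hmpos
    · -- G z = 0
      have h1 : ‖G z‖ ≤ 0 := by nlinarith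
      have h2 : G z = 0 := norm_eq_zero.1 (le_antisymm h1 (norm_nonneg _))
      rw [h2]
      simp
    -- positive case
    have hd₀pos : 0 < Metric.infDist z₀ D'ᶜ := by
      rcases lt_or_ge 0 (Metric.infDist z₀ D'ᶜ) with h | h
      · exact h
      · exfalso
        have h0 : Metric.infDist z₀ D'ᶜ = 0 :=
          le_antisymm h Metric.infDist_nonneg
        rw [hmdef, h0, Real.zero_rpow hβpos.ne', zero_mul] at hmpos
        exact lt_irrefl 0 hmpos
    set t : ℝ := Metric.infDist z₀ D'ᶜ / 2 with htdef
    have ht : 0 < t := by rw [htdef]; linarith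
    have hd₀t : Metric.infDist z₀ D'ᶜ = 2*t := by rw [htdef]; ring
    have htball : ∀ w ∈ Metric.closedBall z₀ t, t ≤ Metric.infDist w D'ᶜ := by
      intro w hw
      have h2 : Metric.infDist z₀ D'ᶜ ≤ Metric.infDist w D'ᶜ + dist z₀ w :=
        Metric.infDist_le_infDist_add_dist
      have h3 : dist z₀ w ≤ t := by rw [dist_comm]; exact Metric.mem_closedBall.1 hw
      linarith
    have hball : Metric.closedBall z₀ t ⊆ D' := by
      intro w hw
      by_contra hwD'
      have h0 : Metric.infDist w D'ᶜ = 0 := Metric.infDist_zero_of_mem hwD'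
      have := htball w hw
      linarith
    have hballD : Metric.closedBall z₀ t ⊆ D := hball.trans hD'subD
    have hP4 : (ENNReal.ofReal (π * t^2))^n * (‖G z₀‖₊:ENNReal) ≤
        ∫⁻ w in Metric.closedBall z₀ t, Gnn w :=
      polydisc_submean G D hD hG z₀ t ht hballD Gnn hGnnmeas
        (fun w hw => le_of_eq (hGnnD w (hballD hw)).symm)
    set S : ℝ := (t^β)⁻¹ * m with hSdef
    have htβpos : 0 < t^β := Real.rpow_pos_of_pos ht β
    have hSpos : 0 < S := by rw [hSdef]; positivity
    have hSball : ∀ w ∈ Metric.closedBall z₀ t, ‖G w‖ ≤ S := by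
      intro w hw
      have h2 : t^β * ‖G w‖ ≤ m := by
        calc t^β * ‖G w‖ ≤ (Metric.infDist w D'ᶜ)^β * ‖G w‖ :=
              mul_le_mul_of_nonneg_right
                (Real.rpow_le_rpow ht.le (htball w hw) hβpos.le) (norm_nonneg _)
          _ ≤ m := hm_ge w (subset_closure (hball hw))
      calc ‖G w‖ = (t^β)⁻¹ * (t^β * ‖G w‖) := by field_simp
        _ ≤ (t^β)⁻¹ * m := mul_le_mul_of_nonneg_left h2 (by positivity)
    -- ae facts
    have hae1 : ∀ᵐ w ∂(volume.restrict (Metric.closedBall z₀ t)), Ψ w ≠ ⊥ := by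
      have h1 : ∀ᵐ w ∂(volume.restrict D'), EReal.exp (-((s:EReal) * Ψ w)) < ⊤ :=
        ae_lt_top hexpsΨmeas hMlt.ne
      have h2 := ae_restrict_of_ae_restrict_of_subset hball h1
      filter_upwards [h2] with w hw
      intro hbot
      rw [hbot, EReal.coe_mul_bot_of_pos hs_pos, EReal.neg_bot, EReal.exp_top] at hw
      exact lt_irrefl _ hw
    have hae2 : ∀ᵐ w ∂(volume.restrict (Metric.closedBall z₀ t)), (Ψ w = ⊤ → Gnn w = 0) := by
      have h1 : ∀ᵐ w ∂(volume.restrict D'), Gnn w ^ 2 * EReal.exp (Ψ w) < ⊤ :=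
        ae_lt_top ((hGnnmeas.pow_const 2).mul hexpΨmeas) hJlt.ne
      have h2 := ae_restrict_of_ae_restrict_of_subset hball h1
      filter_upwards [h2] with w hw
      intro htop
      by_contra h0
      rw [htop, EReal.exp_top, ENNReal.mul_top (pow_ne_zero 2 h0)] at hw
      exact lt_irrefl _ hw
    -- Hölder chain
    have hSne : (ENNReal.ofReal S)^(1-a) ≠ ⊤ :=
      ENNReal.rpow_ne_top_of_nonneg (by linarith) ENNReal.ofReal_ne_top
    have hchain : (ENNReal.ofReal (π * t^2))^n * (‖G z₀‖₊:ENNReal) ≤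
        J^(a/2) * M^((2-a)/2) * (ENNReal.ofReal S)^(1-a) := by
      have hpt : ∀ w ∈ Metric.closedBall z₀ t,
          Gnn w ≤ Gnn w ^ (a:ℝ) * (ENNReal.ofReal S)^(1-a) := by
        intro w hw
        have h1 : Gnn w = Gnn w ^ (a:ℝ) * Gnn w ^ (1-a) := by
          rcases eq_or_ne (Gnn w) 0 with h0 | h0
          · rw [h0, ENNReal.zero_rpow_of_pos ha0, zero_mul]
          · rw [← ENNReal.rpow_add _ _ h0 (hGnnne w)]
            norm_num
        have hle : Gnn w ^ (1-a) ≤ (ENNReal.ofReal S)^(1-a) := by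
          refine ENNReal.rpow_le_rpow ?_ (by linarith)
          rw [hGnnD w (hballD hw), ← enorm_eq_nnnorm, ← ofReal_norm]
          exact ENNReal.ofReal_le_ofReal (hSball w hw)
        exact le_trans (le_of_eq h1) (mul_le_mul_right hle _)
      set f₁ : (Fin n → ℂ) → ENNReal := fun w => (Gnn w^2 * EReal.exp (Ψ w))^(a/2) with hf₁def
      set f₂ : (Fin n → ℂ) → ENNReal :=
        fun w => (EReal.exp (-((s:EReal) * Ψ w)))^((2-a)/2) with hf₂def
      have hf₁ : Measurable f₁ := ((hGnnmeas.pow_const 2).mul hexpΨmeas).pow_const _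
      have hf₂ : Measurable f₂ := hexpsΨmeas.pow_const _
      have hconj : Real.HolderConjugate (2/a) (2/(2-a)) := by
        constructor
        · rw [inv_div, inv_div, inv_one]; ring
        · exact div_pos two_pos ha0
        · exact div_pos two_pos h2a
      have haept : ∀ᵐ w ∂(volume.restrict (Metric.closedBall z₀ t)),
          Gnn w ^ (a:ℝ) ≤ f₁ w * f₂ w := by
        filter_upwards [hae1, hae2] with w h1 h2
        exact pointwise_holder ha0 ha1 hs_def h1 h2
      have hH := ENNReal.lintegral_mul_le_Lp_mul_Lq
        (volume.restrict (Metric.closedBall z₀ t)) hconj hf₁.aemeasurable hf₂.aemeasurable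
      have hf₁p : ∀ w, f₁ w ^ (2/a) = Gnn w^2 * EReal.exp (Ψ w) := by
        intro w
        simp only [hf₁def]
        rw [← ENNReal.rpow_mul, show (a/2)*(2/a) = 1 by field_simp, ENNReal.rpow_one]
      have hf₂q : ∀ w, f₂ w ^ (2/(2-a)) = EReal.exp (-((s:EReal) * Ψ w)) := by
        intro w
        simp only [hf₂def]
        rw [← ENNReal.rpow_mul, show ((2-a)/2)*(2/(2-a)) = 1 by field_simp, ENNReal.rpow_one]
      have he1 : (1:ℝ)/(2/a) = a/2 := one_div_div _ _
      have he2 : (1:ℝ)/(2/(2-a)) = (2-a)/2 := one_div_div _ _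
      have hball' : (∫⁻ w in Metric.closedBall z₀ t, Gnn w ^ 2 * EReal.exp (Ψ w)) ≤ J :=
        lintegral_mono' (Measure.restrict_mono hball le_rfl) le_rfl
      have hballM : (∫⁻ w in Metric.closedBall z₀ t, EReal.exp (-((s:EReal) * Ψ w))) ≤ M :=
        lintegral_mono' (Measure.restrict_mono hball le_rfl) le_rfl
      calc (ENNReal.ofReal (π * t^2))^n * (‖G z₀‖₊:ENNReal)
          ≤ ∫⁻ w in Metric.closedBall z₀ t, Gnn w := hP4
        _ ≤ ∫⁻ w in Metric.closedBall z₀ t, Gnn w ^ (a:ℝ) * (ENNReal.ofReal S)^(1-a) :=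
            setLIntegral_mono' measurableSet_closedBall hpt
        _ = (∫⁻ w in Metric.closedBall z₀ t, Gnn w ^ (a:ℝ)) * (ENNReal.ofReal S)^(1-a) :=
            lintegral_mul_const' _ _ hSne
        _ ≤ (∫⁻ w in Metric.closedBall z₀ t, f₁ w * f₂ w) * (ENNReal.ofReal S)^(1-a) :=
            mul_le_mul_left (lintegral_mono_ae haept) _
        _ ≤ ((∫⁻ w in Metric.closedBall z₀ t, f₁ w ^ (2/a)) ^ ((1:ℝ)/(2/a)) *
              (∫⁻ w in Metric.closedBall z₀ t, f₂ w ^ (2/(2-a))) ^ ((1:ℝ)/(2/(2-a)))) *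
              (ENNReal.ofReal S)^(1-a) := by
            refine mul_le_mul_left ?_ _
            exact hH
        _ = ((∫⁻ w in Metric.closedBall z₀ t, Gnn w ^ 2 * EReal.exp (Ψ w)) ^ (a/2) *
              (∫⁻ w in Metric.closedBall z₀ t, EReal.exp (-((s:EReal) * Ψ w))) ^ ((2-a)/2)) *
              (ENNReal.ofReal S)^(1-a) := by
            rw [he1, he2]
            congr 1
            congr 1
            · congr 1
              exact lintegral_congr fun w => hf₁p w
            · congr 1
              exact lintegral_congr fun w => hf₂q w
        _ ≤ (J^(a/2) * M^((2-a)/2)) * (ENNReal.ofReal S)^(1-a) := by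
            refine mul_le_mul_left ?_ _
            exact mul_le_mul' (ENNReal.rpow_le_rpow hball' (by positivity))
              (ENNReal.rpow_le_rpow hballM (by positivity))
        _ = J^(a/2) * M^((2-a)/2) * (ENNReal.ofReal S)^(1-a) := by ring
    -- pass to reals
    set j : ℝ := J.toReal with hjdef
    have hj0 : 0 ≤ j := ENNReal.toReal_nonneg
    have hmm0 : 0 ≤ mm := ENNReal.toReal_nonneg
    have hRHSne : J^(a/2) * M^((2-a)/2) * (ENNReal.ofReal S)^(1-a) ≠ ⊤ :=
      ENNReal.mul_ne_top (ENNReal.mul_ne_top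
        (ENNReal.rpow_ne_top_of_nonneg (by positivity) hJlt.ne)
        (ENNReal.rpow_ne_top_of_nonneg (by positivity) hMlt.ne)) hSne
    have hrealchain := ENNReal.toReal_mono hRHSne hchain
    have hL : ((ENNReal.ofReal (π*t^2))^n * ((‖G z₀‖₊:ENNReal))).toReal
        = (π*t^2)^n * ‖G z₀‖ := by
      rw [ENNReal.toReal_mul, ENNReal.toReal_pow, ENNReal.toReal_ofReal (by positivity)]
      simp [coe_nnnorm]
    have hR : (J^(a/2) * M^((2-a)/2) * (ENNReal.ofReal S)^(1-a)).toReal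
        = j^(a/2) * mm^((2-a)/2) * S^(1-a) := by
      rw [ENNReal.toReal_mul, ENNReal.toReal_mul, ← ENNReal.toReal_rpow, ← ENNReal.toReal_rpow,
        ← ENNReal.toReal_rpow, ENNReal.toReal_ofReal hSpos.le]
    rw [hL, hR] at hrealchain
    -- real algebra
    have hposP : (0:ℝ) < (π*t^2)^n := by positivity
    have hGz₀le : ‖G z₀‖ ≤ ((π*t^2)^n)⁻¹ * (j^(a/2) * mm^((2-a)/2) * S^(1-a)) := by
      have h := mul_le_mul_of_nonneg_left hrealchain (inv_nonneg.2 hposP.le)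
      rwa [← mul_assoc, inv_mul_cancel₀ hposP.ne', one_mul] at h
    have hm_eq : m = (2:ℝ)^β * t^β * ‖G z₀‖ := by
      rw [hmdef, hd₀t, Real.mul_rpow (by norm_num) ht.le]
    have hSpow : S^(1-a) = (t^β)^(-(1-a)) * m^(1-a) := by
      rw [hSdef, Real.mul_rpow (by positivity) hmpos.le, Real.inv_rpow htβpos.le,
        ← Real.rpow_neg htβpos.le]
    have ht2n : ((t^2)^n : ℝ) = t ^ (2*(n:ℝ)) := by
      rw [← pow_mul, ← Real.rpow_natCast t (2*n)]
      congr 1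
      push_cast; ring
    have hcancel : t^β * (t ^ (2*(n:ℝ)))⁻¹ * ((t^β)^(-(1-a))) = 1 := by
      rw [← Real.rpow_mul ht.le, ← Real.rpow_neg ht.le (2*(n:ℝ)), ← Real.rpow_add ht,
        ← Real.rpow_add ht]
      have hexp : β + -(2*(n:ℝ)) + β * (-(1-a)) = 0 := by linear_combination hβa
      rw [hexp, Real.rpow_zero]
    have key : m ≤ (2:ℝ)^β/π^n * m^(1-a) * (j^(a/2) * mm^((2-a)/2)) := by
      have hstep : m ≤ 2^β * t^β *
          (((π*t^2)^n)⁻¹ * (j^(a/2) * mm^((2-a)/2) * S^(1-a))) := by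
        rw [hm_eq]
        exact mul_le_mul_of_nonneg_left hGz₀le (by positivity)
      refine hstep.trans (le_of_eq ?_)
      rw [hSpow, mul_pow, ht2n, mul_inv]
      linear_combination (((2:ℝ)^β/π^n) * m^(1-a) * (j^(a/2) * mm^((2-a)/2))) * hcancel
    have hm1a : 0 < m^(1-a) := Real.rpow_pos_of_pos hmpos _
    have hma : m^a ≤ (2:ℝ)^β/π^n * (j^(a/2) * mm^((2-a)/2)) := by
      have h1 : m^a * m^(1-a) = m := by
        rw [← Real.rpow_add hmpos]; norm_num
      have h2 : m^a * m^(1-a) ≤ ((2:ℝ)^β/π^n * (j^(a/2)*mm^((2-a)/2))) * m^(1-a) := by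
        rw [h1]
        calc m ≤ (2:ℝ)^β/π^n * m^(1-a) * (j^(a/2) * mm^((2-a)/2)) := key
          _ = ((2:ℝ)^β/π^n * (j^(a/2)*mm^((2-a)/2))) * m^(1-a) := by ring
      exact le_of_mul_le_mul_right h2 hm1a
    have hm2 : m^(2:ℝ) ≤ C₂ * j := by
      have h1 : (m^a)^(2/a) = m^(2:ℝ) := by
        rw [← Real.rpow_mul hmpos.le]
        congr 1
        field_simp
      have h2 := Real.rpow_le_rpow (Real.rpow_nonneg hmpos.le a) hma
        (by positivity : (0:ℝ) ≤ 2/a)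
      rw [h1] at h2
      have h3 : ((2:ℝ)^β/π^n * (j^(a/2) * mm^((2-a)/2)))^(2/a) = C₂ * j := by
        rw [show (2:ℝ)^β/π^n * (j^(a/2)*mm^((2-a)/2))
            = ((2:ℝ)^β/π^n * mm^((2-a)/2)) * j^(a/2) by ring]
        rw [Real.mul_rpow (by positivity) (by positivity), hC₂def]
        congr 1
        rw [← Real.rpow_mul hj0, show (a/2)*(2/a) = 1 by field_simp, Real.rpow_one]
      rw [h3] at h2
      exact h2
    have hzbd : ‖G z‖ ≤ δ^(-β) * m := by
      have h1 : ‖G z‖ = (δ^β)⁻¹ * (δ^β * ‖G z‖) := by field_simp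
      rw [h1, Real.rpow_neg hδpos.le]
      exact mul_le_mul_of_nonneg_left hzbd' (by positivity)
    have hz2 : ‖G z‖^(2:ℝ) ≤ δ^(-(2*β)) * (C₂ * j) := by
      have h1 : ‖G z‖^(2:ℝ) ≤ (δ^(-β) * m)^(2:ℝ) :=
        Real.rpow_le_rpow (norm_nonneg _) hzbd (by norm_num)
      have h2 : (δ^(-β)*m)^(2:ℝ) = δ^(-(2*β)) * m^(2:ℝ) := by
        rw [Real.mul_rpow (by positivity) hmpos.le, ← Real.rpow_mul hδpos.le]
        congr 2
        ring
      calc ‖G z‖^(2:ℝ) ≤ δ^(-(2*β)) * m^(2:ℝ) := by rw [← h2]; exact h1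
        _ ≤ δ^(-(2*β)) * (C₂ * j) := mul_le_mul_of_nonneg_left hm2 (by positivity)
    have h0 : ((‖G z‖₊:ENNReal))^2 = ENNReal.ofReal (‖G z‖^(2:ℝ)) := by
      rw [Real.rpow_two, ENNReal.ofReal_pow (norm_nonneg _), ofReal_norm, enorm_eq_nnnorm]
    rw [h0]
    calc ENNReal.ofReal (‖G z‖^(2:ℝ))
        ≤ ENNReal.ofReal (δ^(-(2*β)) * (C₂*j)) := ENNReal.ofReal_le_ofReal hz2
      _ = ENNReal.ofReal (δ^(-(2*β)) * C₂) * ENNReal.ofReal j := by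
          rw [show δ^(-(2*β)) * (C₂*j) = (δ^(-(2*β))*C₂)*j by ring,
            ENNReal.ofReal_mul (by positivity)]
      _ = ENNReal.ofReal (δ^(-(2*β)) * C₂) * J := by rw [hjdef, ENNReal.ofReal_toReal hJlt.ne]
      _ ≤ ENNReal.ofReal (δ^(-(2*β)) * C₂ + 1) * J :=
          mul_le_mul_left (ENNReal.ofReal_le_ofReal (by linarith)) _
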